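/- Let n be a positive integer. There is a short exact sequence of kV₄-modules 0 → M_n → (kV₄)^n → M_n → 0; that is, there exist an injective kV₄-module homomorphism ι : M_n → (kV₄)^n and a surjective kV₄-module homomorphism π : (kV₄)^n → M_n with range ι = ker π. In particular Ω(M_n) ≅ M_n. -/

import Mathlib

/-- The Klein four group. -/
abbrev V4 : Type := Multiplicative (ZMod 2 × ZMod 2)

/-- The first generator `s` of the Klein four group. -/
def sV4 : V4 := Multiplicative.ofAdd (1, 0)

/-- The second generator `t` of the Klein four group. -/
def tV4 : V4 := Multiplicative.ofAdd (0, 1)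

/-- `B` is a `k`-basis `a_1,…,a_n,b_1,…,b_n` of the `kV₄`-module `M` on which
`x = s - 1` and `y = t - 1` act by `x·a_i = b_i`, `y·a_i = b_{i+1}` (`i < n`),
`y·a_n = 0`, `x·b_i = y·b_i = 0`; i.e. `M` is the module `M_n`. -/
def IsKleinModuleBasis (k : Type) [Field k] (n : ℕ) (M : Type) [AddCommGroup M]
    [Module k M] [Module (MonoidAlgebra k V4) M]
    [IsScalarTower k (MonoidAlgebra k V4) M]
    (B : Module.Basis (Fin n ⊕ Fin n) k M) : Prop :=
  (∀ i : Fin n, (MonoidAlgebra.of k V4 sV4 - 1) • B (Sum.inl i) = B (Sum.inr i)) ∧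
  (∀ (i : Fin n) (h : (i : ℕ) + 1 < n),
      (MonoidAlgebra.of k V4 tV4 - 1) • B (Sum.inl i) = B (Sum.inr ⟨(i : ℕ) + 1, h⟩)) ∧
  (∀ i : Fin n, (i : ℕ) + 1 = n → (MonoidAlgebra.of k V4 tV4 - 1) • B (Sum.inl i) = 0) ∧
  (∀ i : Fin n, (MonoidAlgebra.of k V4 sV4 - 1) • B (Sum.inr i) = 0) ∧
  (∀ i : Fin n, (MonoidAlgebra.of k V4 tV4 - 1) • B (Sum.inr i) = 0)

/-- Extend a `k`-linear `V4`-equivariant map to a `kV4`-linear map. -/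
def extendKlein {k : Type} [Field k] {M N : Type} [AddCommGroup M] [Module k M]
    [Module (MonoidAlgebra k V4) M] [IsScalarTower k (MonoidAlgebra k V4) M]
    [AddCommGroup N] [Module k N] [Module (MonoidAlgebra k V4) N]
    [IsScalarTower k (MonoidAlgebra k V4) N]
    (f : M →ₗ[k] N)
    (hf : ∀ (g : V4) (m : M),
      f (MonoidAlgebra.of k V4 g • m) = MonoidAlgebra.of k V4 g • f m) :
    M →ₗ[MonoidAlgebra k V4] N where
  toFun := f
  map_add' := f.map_add
  map_smul' c m := by
    induction c using MonoidAlgebra.induction_on with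
    | of g => exact hf g m
    | add a b ha hb =>
      simp only [RingHom.id_apply] at *
      rw [add_smul, map_add, ha, hb, add_smul]
    | smul r c hc =>
      simp only [RingHom.id_apply] at *
      rw [smul_assoc, f.map_smul, hc, smul_assoc]

set_option maxHeartbeats 1600000

/-- There is a short exact sequence `0 → M_n → (kV₄)^n → M_n → 0`;
in particular `Ω(M_n) ≅ M_n`. -/
theorem stmt7 (k : Type) [Field k] [IsAlgClosed k] [CharP k 2]
    (n : ℕ) (hn : 0 < n)
    (M : Type) [AddCommGroup M] [Module k M] [Module (MonoidAlgebra k V4) M]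
    [IsScalarTower k (MonoidAlgebra k V4) M]
    (B : Module.Basis (Fin n ⊕ Fin n) k M) (hB : IsKleinModuleBasis k n M B) :
    ∃ (ι : M →ₗ[MonoidAlgebra k V4] (Fin n → MonoidAlgebra k V4))
      (π : (Fin n → MonoidAlgebra k V4) →ₗ[MonoidAlgebra k V4] M),
      Function.Injective ι ∧ Function.Surjective π ∧
        LinearMap.range ι = LinearMap.ker π := by
  obtain ⟨hB1, hB2, hB3, hB4, hB5⟩ := hB
  set A := MonoidAlgebra k V4 with hA
  set S' : A := MonoidAlgebra.of k V4 sV4 with hS'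
  set T' : A := MonoidAlgebra.of k V4 tV4 with hT'
  haveI : CharP A 2 := charP_of_injective_algebraMap (algebraMap k A).injective 2
  have h2A : (2 : A) = 0 := CharTwo.two_eq_zero
  have h2M : ∀ m : M, m + m = 0 := by
    intro m
    have : ((2 : k)) • m = 0 := by rw [show (2:k) = 0 from CharTwo.two_eq_zero, zero_smul]
    rw [← this, two_smul]
  -- ring identities
  have hS2 : S' * S' = 1 := by
    rw [hS', ← map_mul, show sV4 * sV4 = 1 from by decide, map_one]
  have hT2 : T' * T' = 1 := by
    rw [hT', ← map_mul, show tV4 * tV4 = 1 from by decide, map_one]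
  obtain ⟨X, hX⟩ : ∃ X' : A, X' = S' - 1 := ⟨_, rfl⟩
  obtain ⟨Y, hY⟩ : ∃ Y' : A, Y' = T' - 1 := ⟨_, rfl⟩
  have hSY : S' * Y = Y + X * Y := by rw [hX, hY]; ring
  have hTX : T' * X = X + X * Y := by rw [hX, hY]; ring
  have hSX : S' * X = X := by rw [hX]; linear_combination hS2 + (1 - S') * h2A
  have hTY : T' * Y = Y := by rw [hY]; linear_combination hT2 + (1 - T') * h2A
  have hSXY : S' * (X * Y) = X * Y := by rw [← mul_assoc, hSX]
  have hTXY : T' * (X * Y) = X * Y := by rw [mul_left_comm, hTY]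
  -- module facts
  have hSa : ∀ i, S' • B (Sum.inl i) = B (Sum.inl i) + B (Sum.inr i) := by
    intro i
    have h := hB1 i
    rw [sub_smul, one_smul, sub_eq_iff_eq_add] at h
    rw [h, add_comm]
  have hSb : ∀ i, S' • B (Sum.inr i) = B (Sum.inr i) := by
    intro i
    have h := hB4 i
    rwa [sub_smul, one_smul, sub_eq_zero] at h
  have hTb : ∀ i, T' • B (Sum.inr i) = B (Sum.inr i) := by
    intro i
    have h := hB5 i
    rwa [sub_smul, one_smul, sub_eq_zero] at h
  have hTa : ∀ (i : Fin n) (h : (i:ℕ)+1 < n),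
      T' • B (Sum.inl i) = B (Sum.inl i) + B (Sum.inr ⟨(i:ℕ)+1, h⟩) := by
    intro i h
    have h' := hB2 i h
    rw [sub_smul, one_smul, sub_eq_iff_eq_add] at h'
    rw [h', add_comm]
  have hTa' : ∀ (i : Fin n), (i:ℕ)+1 = n → T' • B (Sum.inl i) = B (Sum.inl i) := by
    intro i h
    have h' := hB3 i h
    rwa [sub_smul, one_smul, sub_eq_zero] at h'
  -- single smul facts in A^n
  have hsm : ∀ (c d : A) (i : Fin n), c • (Pi.single i d : Fin n → A) = Pi.single i (c * d) := by
    intro c d i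
    funext j
    by_cases h : j = i
    · subst h; simp
    · simp [Pi.single_eq_of_ne h]
  -- the map f on basis vectors
  set f : (Fin n ⊕ Fin n) → (Fin n → A) := Sum.elim
    (fun i => if h : (i:ℕ)+1 < n then
        Pi.single i Y + Pi.single (⟨(i:ℕ)+1, h⟩ : Fin n) X else Pi.single i Y)
    (fun i => Pi.single i (X * Y)) with hf
  set ι₀ : M →ₗ[k] (Fin n → A) := B.constr k f with hι₀
  have hι₀a : ∀ i : Fin n, ι₀ (B (Sum.inl i)) = if h : (i:ℕ)+1 < n then
      Pi.single i Y + Pi.single (⟨(i:ℕ)+1, h⟩ : Fin n) X else Pi.single i Y := by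
    intro i; rw [hι₀, B.constr_basis, hf]; rfl
  have hι₀b : ∀ i : Fin n, ι₀ (B (Sum.inr i)) = Pi.single i (X * Y) := by
    intro i; rw [hι₀, B.constr_basis, hf]; rfl
  -- reduce equivariance to basis
  have basisEq : ∀ (c : A), (∀ j, ι₀ (c • B j) = c • ι₀ (B j)) →
      ∀ m : M, ι₀ (c • m) = c • ι₀ m := by
    intro c hc m
    have h : (ι₀ ∘ₗ ((LinearMap.lsmul A M c).restrictScalars k)) =
        (((LinearMap.lsmul A (Fin n → A) c).restrictScalars k) ∘ₗ ι₀) :=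
      B.ext fun j => by simpa using hc j
    exact DFunLike.congr_fun h m
  -- equivariance for S'
  have hequivS : ∀ m : M, ι₀ (S' • m) = S' • ι₀ m := by
    apply basisEq
    rintro (i | i)
    · rw [hSa i, map_add, hι₀a, hι₀b]
      by_cases h : (i:ℕ)+1 < n
      · rw [dif_pos h, smul_add, hsm, hsm, hSY, hSX, Pi.single_add]
        abel
      · rw [dif_neg h, hsm, hSY, Pi.single_add]
    · rw [hSb i, hι₀b, hsm, hSXY]
  have hequivT : ∀ m : M, ι₀ (T' • m) = T' • ι₀ m := by
    apply basisEq
    rintro (i | i)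
    · by_cases h : (i:ℕ)+1 < n
      · rw [hTa i h, map_add, hι₀a, hι₀b, dif_pos h, smul_add, hsm, hsm, hTY, hTX,
          Pi.single_add]
        abel
      · rw [hTa' i (by omega), hι₀a, dif_neg h, hsm, hTY]
    · rw [hTb i, hι₀b, hsm, hTXY]
  have hequiv : ∀ (g : V4) (m : M),
      ι₀ (MonoidAlgebra.of k V4 g • m) = MonoidAlgebra.of k V4 g • ι₀ m := by
    have hg4 : ∀ g : V4, g = 1 ∨ g = sV4 ∨ g = tV4 ∨ g = sV4 * tV4 := by decide
    intro g m
    rcases hg4 g with h | h | h | h <;> subst h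
    · rw [map_one, one_smul, one_smul]
    · exact hequivS m
    · exact hequivT m
    · rw [map_mul, mul_smul, mul_smul, ← hS', ← hT', hequivS, hequivT]
  set ι : M →ₗ[A] (Fin n → A) := extendKlein ι₀ hequiv with hι
  have hιeq : ∀ m, ι m = ι₀ m := fun m => rfl
  -- the surjection π
  set π : (Fin n → A) →ₗ[A] M :=
    { toFun := fun v => ∑ i, v i • B (Sum.inl i),
      map_add' := fun u v => by
        simp only [Pi.add_apply, add_smul, Finset.sum_add_distrib],
      map_smul' := fun c v => by
        simp only [Pi.smul_apply, smul_eq_mul, mul_smul, RingHom.id_apply, Finset.smul_sum] }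
    with hπ
  have hπs : ∀ (i : Fin n) (c : A), π (Pi.single i c) = c • B (Sum.inl i) := by
    intro i c
    show (∑ j, (Pi.single i c : Fin n → A) j • B (Sum.inl j)) = c • B (Sum.inl i)
    rw [Finset.sum_eq_single i]
    · rw [Pi.single_eq_same]
    · intro j _ hj
      rw [Pi.single_eq_of_ne hj, zero_smul]
    · intro h
      exact absurd (Finset.mem_univ i) h
  have hπι : ∀ j, π (ι₀ (B j)) = 0 := by
    rintro (i | i)
    · rw [hι₀a]
      by_cases h : (i:ℕ)+1 < n
      · rw [dif_pos h, map_add, hπs, hπs, hY, hB2 i h, hX, hB1]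
        exact h2M _
      · rw [dif_neg h, hπs, hY, hB3 i (by omega)]
    · rw [hι₀b, hπs, mul_smul]
      by_cases h : (i:ℕ)+1 < n
      · rw [hY, hB2 i h, hX, hB4]
      · rw [hY, hB3 i (by omega), smul_zero]
  have hsurj : Function.Surjective π := by
    have hrange : ∀ j, B j ∈ LinearMap.range π := by
      rintro (i | i)
      · exact ⟨Pi.single i 1, by rw [hπs, one_smul]⟩
      · refine ⟨(S' - 1) • (Pi.single i (1:A) : Fin n → A), ?_⟩
        rw [map_smul, hπs, one_smul, hB1]
    intro m
    have hsp : Submodule.span k (Set.range B) ≤ (LinearMap.range π).restrictScalars k := by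
      rw [Submodule.span_le]
      rintro _ ⟨j, rfl⟩
      exact hrange j
    have hm : m ∈ Submodule.span k (Set.range B) := by rw [B.span_eq]; trivial
    exact hsp hm
  -- the retraction ρ
  set bA : Module.Basis V4 k A := MonoidAlgebra.basis V4 k with hbA
  set gfun : Fin n → V4 → M := fun i g =>
    if g = tV4 then B (Sum.inl i)
    else if g = sV4 * tV4 then B (Sum.inl i) + B (Sum.inr i) else 0 with hgfun
  set ρ : (Fin n → A) →ₗ[k] M :=
    ∑ i : Fin n, (bA.constr k (gfun i)) ∘ₗ ((LinearMap.proj (R := A) (φ := fun _ : Fin n => A) i).restrictScalars k) with hρ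
  have hρsingle : ∀ (i : Fin n) (c : A), ρ (Pi.single i c) = bA.constr k (gfun i) c := by
    intro i c
    rw [hρ, LinearMap.sum_apply, Finset.sum_eq_single i]
    · simp only [LinearMap.comp_apply, LinearMap.restrictScalars_apply, LinearMap.proj_apply,
        Pi.single_eq_same]
    · intro j _ hj
      simp only [LinearMap.comp_apply, LinearMap.restrictScalars_apply, LinearMap.proj_apply,
        Pi.single_eq_of_ne hj, map_zero]
    · intro h
      exact absurd (Finset.mem_univ i) h
  have hcon : ∀ (i : Fin n) (g : V4),
      (bA.constr k (gfun i)) (MonoidAlgebra.single g 1) = gfun i g := by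
    intro i g
    rw [show (MonoidAlgebra.single g (1:k) : A) = bA g from rfl,
      Module.Basis.constr_basis]
  have hXs : X = MonoidAlgebra.single sV4 1 - MonoidAlgebra.single 1 1 := by
    rw [hX, hS', MonoidAlgebra.of_apply, MonoidAlgebra.one_def]
  have hYs : Y = MonoidAlgebra.single tV4 1 - MonoidAlgebra.single 1 1 := by
    rw [hY, hT', MonoidAlgebra.of_apply, MonoidAlgebra.one_def]
  have hXYs : X * Y = MonoidAlgebra.single (sV4*tV4) 1 - MonoidAlgebra.single sV4 1
      - MonoidAlgebra.single tV4 1 + MonoidAlgebra.single 1 1 := by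
    rw [hXs, hYs, sub_mul, mul_sub, mul_sub, MonoidAlgebra.single_mul_single,
      MonoidAlgebra.single_mul_single, MonoidAlgebra.single_mul_single,
      MonoidAlgebra.single_mul_single]
    simp only [mul_one, one_mul]
    abel
  have d1 : ¬((1:V4) = tV4) := by decide
  have d2 : ¬((1:V4) = sV4 * tV4) := by decide
  have d3 : ¬(sV4 = tV4) := by decide
  have d4 : ¬(sV4 = sV4 * tV4) := by decide
  have d5 : ¬(sV4 * tV4 = tV4) := by decide
  have hgt : ∀ i, gfun i tV4 = B (Sum.inl i) := fun i => by rw [hgfun]; simp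
  have hg1 : ∀ i, gfun i 1 = 0 := fun i => by rw [hgfun]; simp [d1, d2]
  have hgs : ∀ i, gfun i sV4 = 0 := fun i => by rw [hgfun]; simp [d3, d4]
  have hgst : ∀ i, gfun i (sV4 * tV4) = B (Sum.inl i) + B (Sum.inr i) := fun i => by
    rw [hgfun]; simp [d5]
  have hρf : ∀ j, ρ (ι₀ (B j)) = B j := by
    rintro (i | i)
    · rw [hι₀a]
      by_cases h : (i:ℕ)+1 < n
      · rw [dif_pos h, map_add, hρsingle, hρsingle, hYs, hXs, map_sub, map_sub,
          hcon, hcon, hcon, hcon]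
        simp only [hgt, hg1, hgs]
        simp
      · rw [dif_neg h, hρsingle, hYs, map_sub, hcon, hcon]
        simp only [hgt, hg1]
        simp
    · rw [hι₀b, hρsingle, hXYs, map_add, map_sub, map_sub, hcon, hcon, hcon, hcon]
      simp only [hgst, hgs, hgt, hg1]
      abel
  have hinj : Function.Injective ι := by
    have hcomp : (ρ ∘ₗ (ι.restrictScalars k)) = LinearMap.id := B.ext fun j => by
      simp only [LinearMap.comp_apply, LinearMap.restrictScalars_apply, LinearMap.id_apply]
      exact hρf j
    intro m m' h
    have h1 : ρ (ι m) = m := DFunLike.congr_fun hcomp m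
    have h2 : ρ (ι m') = m' := DFunLike.congr_fun hcomp m'
    rw [← h1, ← h2, h]
  -- π ∘ ι = 0
  have hπι0 : ∀ m, π (ι m) = 0 := by
    have hcomp0 : ((π.restrictScalars k) ∘ₗ (ι.restrictScalars k)) = 0 := by
      apply B.ext
      intro j
      simp only [LinearMap.comp_apply, LinearMap.restrictScalars_apply, LinearMap.zero_apply]
      exact hπι j
    intro m
    exact DFunLike.congr_fun hcomp0 m
  have hle : LinearMap.range ι ≤ LinearMap.ker π := by
    rintro a ⟨m, rfl⟩
    exact LinearMap.mem_ker.mpr (hπι0 m)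
  -- dimension count
  haveI : Module.Finite k M := Module.Finite.of_basis B
  haveI : Module.Finite k A := Module.Finite.of_basis bA
  haveI : Module.Finite k (Fin n → A) := inferInstance
  have hMrank : Module.finrank k M = n + n := by
    rw [Module.finrank_eq_card_basis B]
    simp [Fintype.card_sum]
  have hArank : Module.finrank k A = 4 := by
    rw [Module.finrank_eq_card_basis bA]
    rfl
  have hPirank : Module.finrank k (Fin n → A) = n * 4 := by
    rw [Module.finrank_pi_fintype, Finset.sum_congr rfl (fun i _ => hArank)]
    simp [Finset.sum_const, mul_comm]
  have hπ'range : LinearMap.range (π.restrictScalars k) = ⊤ :=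
    LinearMap.range_eq_top.mpr hsurj
  have hrk := LinearMap.finrank_range_add_finrank_ker (π.restrictScalars k)
  rw [hπ'range, finrank_top, hMrank, hPirank] at hrk
  have hkerrank : Module.finrank k (LinearMap.ker (π.restrictScalars k)) = n + n := by
    omega
  have hrangerank :
      Module.finrank k (LinearMap.range (ι.restrictScalars k)) = n + n := by
    rw [LinearMap.finrank_range_of_inj (f := ι.restrictScalars k) hinj, hMrank]
  have hkeq : (LinearMap.range ι).restrictScalars k = LinearMap.range (ι.restrictScalars k) := by
    ext a
    rfl
  have hkeq2 : (LinearMap.ker π).restrictScalars k = LinearMap.ker (π.restrictScalars k) := by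
    ext a
    rfl
  have heq : (LinearMap.range ι).restrictScalars k = (LinearMap.ker π).restrictScalars k := by
    apply Submodule.eq_of_le_of_finrank_eq
    · exact hle
    · rw [hkeq, hkeq2, hrangerank, hkerrank]
  exact ⟨ι, π, hinj, hsurj, Submodule.restrictScalars_injective k _ _ heq⟩
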